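/- Let A be a commutative ring with identity, B ⊆ A a subring, and h ∈ B a non-nilpotent element such that Ah + B = A. Then for every r ≥ 3, every α ∈ E_r(A_h) can be written as α = γ_h·β, where γ ∈ E_r(A), γ_h is its image in E_r(A_h), and β ∈ E_r(B_h). -/

import Mathlib

/-- The elementary matrix `e_{ij}(a) = 1 + a·E_{ij}`. -/
def elemMat {R : Type*} [Ring R] {n : ℕ} (i j : Fin n) (a : R) :
    Matrix (Fin n) (Fin n) R :=
  1 + Matrix.single i j a

/-- The elementary subgroup `Eₙ(R)` of `GLₙ(R)`. -/
def elementaryGroup (n : ℕ) (R : Type*) [Ring R] :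
    Subgroup (Matrix (Fin n) (Fin n) R)ˣ :=
  Subgroup.closure {g | ∃ i j a, i ≠ j ∧ g.val = elemMat i j a}

/-- The natural ring homomorphism `B_h → A_h` for a subring `B ⊆ A` and `h ∈ B`. -/
noncomputable def locSubringMap (A : Type*) [CommRing A] (B : Subring A) (h : A)
    (hB : h ∈ B) :
    Localization.Away (⟨h, hB⟩ : B) →+* Localization.Away h :=
  Localization.awayLift ((algebraMap A (Localization.Away h)).comp B.subtype)
    (⟨h, hB⟩ : B)
    (by
      simpa using
        IsLocalization.map_units (M := Submonoid.powers h) (Localization.Away h)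
          ⟨h, Submonoid.mem_powers h⟩)

namespace VorstAux

open Matrix

variable {R : Type*} [CommRing R] {n : ℕ}


lemma stdBasisMatrix_neg (i j : Fin n) (a : R) :
    single i j (-a) = - single i j a := by
  ext i' j'
  simp only [Matrix.single, Matrix.neg_apply, Matrix.of_apply]
  split <;> simp

lemma elemMat_zero (i j : Fin n) : elemMat i j (0 : R) = 1 := by
  simp [elemMat]

lemma elemMat_mul_add {i j : Fin n} (hij : i ≠ j) (a b : R) :
    elemMat i j a * elemMat i j b = elemMat i j (a + b) := by
  simp [elemMat, mul_add, add_mul, single_mul_single_of_ne, hij, hij.symm,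
    single_add]
  abel

/-- Commuting case. -/
lemma elemMat_comm {i j k l : Fin n} (hli : l ≠ i) (hjk : j ≠ k) (w z : R) :
    elemMat k l w * elemMat i j z = elemMat i j z * elemMat k l w := by
  simp [elemMat, mul_add, add_mul, single_mul_single_of_ne, hli, hjk, hli.symm, hjk.symm]
  abel

lemma elemMat_conj2 {i j k : Fin n} (hkj : k ≠ j) (hki : k ≠ i) (hij : i ≠ j) (w z : R) :
    elemMat k i w * elemMat i j z = (elemMat i j z * elemMat k j (w * z)) * elemMat k i w := by
  simp [elemMat, mul_add, add_mul, single_mul_single_of_ne, hkj, hki, hij,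
    hkj.symm, hki.symm, hij.symm, single_mul_single_same]
  abel

lemma elemMat_conj3 {i j l : Fin n} (hli : l ≠ i) (hlj : l ≠ j) (hij : i ≠ j) (w z : R) :
    elemMat j l w * elemMat i j z = (elemMat i l (-(z * w)) * elemMat i j z) * elemMat j l w := by
  simp [elemMat, mul_add, add_mul, single_mul_single_of_ne, hli, hlj, hij,
    hli.symm, hlj.symm, hij.symm, single_mul_single_same, stdBasisMatrix_neg]
  abel

lemma elemMat_commutator {i j p : Fin n} (hij : i ≠ j) (hip : i ≠ p) (hpj : p ≠ j)
    (z₁ z₂ : R) :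
    elemMat i j (z₁ * z₂) =
      elemMat i p z₁ * elemMat p j z₂ * elemMat i p (-z₁) * elemMat p j (-z₂) := by
  simp [elemMat, mul_add, add_mul, single_mul_single_of_ne, hij, hip, hpj,
    hij.symm, hip.symm, hpj.symm, single_mul_single_same, stdBasisMatrix_neg]
  abel



/-- The elementary matrix as a unit. -/
def elemUnit (i j : Fin n) (hij : i ≠ j) (a : R) : (Matrix (Fin n) (Fin n) R)ˣ where
  val := elemMat i j a
  inv := elemMat i j (-a)
  val_inv := by rw [elemMat_mul_add hij]; simp [elemMat_zero]
  inv_val := by rw [elemMat_mul_add hij]; simp [elemMat_zero]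

@[simp] lemma elemUnit_val (i j : Fin n) (hij : i ≠ j) (a : R) :
    (elemUnit i j hij a).val = elemMat i j a := rfl

lemma elemUnit_mul {i j : Fin n} (hij : i ≠ j) (a b : R) :
    elemUnit i j hij a * elemUnit i j hij b = elemUnit i j hij (a + b) :=
  Units.ext (elemMat_mul_add hij a b)

lemma elemUnit_inv {i j : Fin n} (hij : i ≠ j) (a : R) :
    (elemUnit i j hij a)⁻¹ = elemUnit i j hij (-a) :=
  Units.ext rfl

lemma conj_eq_of {G : Type*} [Group G] {g x y : G} (h : g * x = y * g) :
    g * x * g⁻¹ = y := by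
  rw [h, mul_inv_cancel_right]

/-- unit-level versions of the conjugation identities -/
lemma elemUnit_conj_comm {i j k l : Fin n} (hkl : k ≠ l) (hij : i ≠ j)
    (hli : l ≠ i) (hjk : j ≠ k) (w z : R) :
    elemUnit k l hkl w * elemUnit i j hij z * (elemUnit k l hkl w)⁻¹ =
      elemUnit i j hij z :=
  conj_eq_of (Units.ext (elemMat_comm hli hjk w z))

lemma elemUnit_conj2 {i j k : Fin n} (hkj : k ≠ j) (hki : k ≠ i) (hij : i ≠ j) (w z : R) :
    elemUnit k i hki w * elemUnit i j hij z * (elemUnit k i hki w)⁻¹ =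
      elemUnit i j hij z * elemUnit k j hkj (w * z) :=
  conj_eq_of (Units.ext (elemMat_conj2 hkj hki hij w z))

lemma elemUnit_conj3 {i j l : Fin n} (hli : l ≠ i) (hlj : l ≠ j) (hij : i ≠ j)
    (hil : i ≠ l) (hjl : j ≠ l) (w z : R) :
    elemUnit j l hjl w * elemUnit i j hij z * (elemUnit j l hjl w)⁻¹ =
      elemUnit i l hil (-(z * w)) * elemUnit i j hij z :=
  conj_eq_of (Units.ext (elemMat_conj3 hli hlj hij w z))

lemma elemUnit_commutator {i j p : Fin n} (hij : i ≠ j) (hip : i ≠ p) (hpj : p ≠ j)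
    (z₁ z₂ : R) :
    elemUnit i j hij (z₁ * z₂) =
      elemUnit i p hip z₁ * elemUnit p j hpj z₂ *
        elemUnit i p hip (-z₁) * elemUnit p j hpj (-z₂) :=
  Units.ext (elemMat_commutator hij hip hpj z₁ z₂)

/-- Elementary generators with entries in a set `s`. -/
def elemSetOn (n : ℕ) (R : Type*) [Ring R] (s : Set R) :
    Set (Matrix (Fin n) (Fin n) R)ˣ :=
  {g | ∃ i j a, i ≠ j ∧ a ∈ s ∧ g.val = elemMat i j a}

def elGroupOn (n : ℕ) (R : Type*) [Ring R] (s : Set R) :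
    Subgroup (Matrix (Fin n) (Fin n) R)ˣ :=
  Subgroup.closure (elemSetOn n R s)

lemma mem_elemSetOn {s : Set R} {g : (Matrix (Fin n) (Fin n) R)ˣ} :
    g ∈ elemSetOn n R s ↔ ∃ i j a, ∃ hij : i ≠ j, a ∈ s ∧ g = elemUnit i j hij a := by
  constructor
  · rintro ⟨i, j, a, hij, ha, hval⟩
    exact ⟨i, j, a, hij, ha, Units.ext hval⟩
  · rintro ⟨i, j, a, hij, ha, rfl⟩
    exact ⟨i, j, a, hij, ha, rfl⟩

lemma elemUnit_mem {s : Set R} {i j : Fin n} (hij : i ≠ j) {a : R} (ha : a ∈ s) :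
    elemUnit i j hij a ∈ elGroupOn n R s :=
  Subgroup.subset_closure ⟨i, j, a, hij, ha, rfl⟩

lemma elGroupOn_mono {s t : Set R} (hst : s ⊆ t) : elGroupOn n R s ≤ elGroupOn n R t :=
  Subgroup.closure_mono (fun g ⟨i, j, a, hij, ha, hval⟩ => ⟨i, j, a, hij, hst ha, hval⟩)

lemma elementaryGroup_eq (n : ℕ) (R : Type*) [Ring R] :
    elementaryGroup n R = elGroupOn n R Set.univ := by
  unfold elementaryGroup elGroupOn elemSetOn
  congr 1
  ext g
  simp

lemma elemUnit_mem_elementaryGroup {i j : Fin n} (hij : i ≠ j) (a : R) :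
    elemUnit i j hij a ∈ elementaryGroup n R := by
  rw [elementaryGroup_eq]; exact elemUnit_mem hij trivial

section Map

variable {R' : Type*} [CommRing R'] (f : R →+* R')

lemma mapMatrix_elemMat (i j : Fin n) (a : R) :
    f.mapMatrix (elemMat i j a) = elemMat i j (f a) := by
  ext i' j'
  simp only [RingHom.mapMatrix_apply, elemMat, Matrix.map_apply, Matrix.add_apply,
    Matrix.single, Matrix.one_apply, Matrix.of_apply]
  split <;> split <;> simp_all

lemma map_elemUnit (i j : Fin n) (hij : i ≠ j) (a : R) :
    Units.map f.mapMatrix.toMonoidHom (elemUnit i j hij a) = elemUnit i j hij (f a) :=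
  Units.ext (mapMatrix_elemMat f i j a)

lemma map_elGroupOn (s : Set R) :
    (elGroupOn n R s).map (Units.map f.mapMatrix.toMonoidHom) =
      elGroupOn n R' (f '' s) := by
  rw [elGroupOn, MonoidHom.map_closure]
  congr 1
  ext g
  constructor
  · rintro ⟨g₀, hg₀, rfl⟩
    rw [mem_elemSetOn] at hg₀
    obtain ⟨i, j, a, hij, ha, rfl⟩ := hg₀
    rw [map_elemUnit]
    exact ⟨i, j, f a, hij, ⟨a, ha, rfl⟩, rfl⟩
  · rintro ⟨i, j, a', hij, ⟨a, ha, rfl⟩, hval⟩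
    refine ⟨elemUnit i j hij a, ⟨i, j, a, hij, ha, rfl⟩, ?_⟩
    rw [map_elemUnit]
    exact (Units.ext hval).symm

lemma map_elementaryGroup :
    (elementaryGroup n R).map (Units.map f.mapMatrix.toMonoidHom) =
      elGroupOn n R' (Set.range f) := by
  rw [elementaryGroup_eq, map_elGroupOn, Set.image_univ]

end Map

/-- Conjugation into a subgroup, reduced to generators. -/
lemma conj_mem_of_mem_elGroupOn {s : Set R} {T : Subgroup (Matrix (Fin n) (Fin n) R)ˣ}
    {g : (Matrix (Fin n) (Fin n) R)ˣ}
    (hgen : ∀ x ∈ elemSetOn n R s, g * x * g⁻¹ ∈ T) :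
    ∀ x ∈ elGroupOn n R s, g * x * g⁻¹ ∈ T := by
  intro x hx
  induction hx using Subgroup.closure_induction with
  | mem y hy => exact hgen y hy
  | one => simpa using T.one_mem
  | mul y z hy hz hy' hz' =>
    have : g * (y * z) * g⁻¹ = (g * y * g⁻¹) * (g * z * g⁻¹) := by group
    rw [this]; exact T.mul_mem hy' hz'
  | inv y hy hy' =>
    have : g * y⁻¹ * g⁻¹ = (g * y * g⁻¹)⁻¹ := by group
    rw [this]; exact T.inv_mem hy'


section RingPart

variable {A : Type*} [CommRing A] {B : Subring A} {h : A}

lemma psi_algebraMap (A : Type*) [CommRing A] (B : Subring A) (h : A) (hB : h ∈ B) (x : B) :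
    locSubringMap A B h hB (algebraMap B (Localization.Away (⟨h, hB⟩ : B)) x) =
      algebraMap A (Localization.Away h) (x : A) := by
  simp [locSubringMap, Localization.awayLift, IsLocalization.Away.lift_eq]

lemma hsum_pow (A : Type*) [CommRing A] (B : Subring A) (h : A) (hB : h ∈ B)
    (hsum : ∀ a : A, ∃ c : A, ∃ b ∈ B, a = c * h + b) (N : ℕ) (a : A) :
    ∃ c : A, ∃ b ∈ B, a = c * h ^ N + b := by
  induction N with
  | zero => exact ⟨a, 0, B.zero_mem, by simp⟩
  | succ N ih =>
    obtain ⟨c, b, hb, rfl⟩ := ih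
    obtain ⟨c', b', hb', hc⟩ := hsum c
    refine ⟨c', b' * h ^ N + b, B.add_mem (B.mul_mem hb' (B.pow_mem hB N)) hb, ?_⟩
    rw [hc]; ring

lemma clear_denominator (A : Type*) [CommRing A] (B : Subring A) (h : A) (hB : h ∈ B)
    (w : Localization.Away (⟨h, hB⟩ : B)) :
    ∃ m : ℕ, ∃ b : A, b ∈ B ∧
      algebraMap A (Localization.Away h) h ^ m * locSubringMap A B h hB w =
        algebraMap A (Localization.Away h) b := by
  obtain ⟨⟨b, s⟩, hs⟩ := IsLocalization.surj (M := Submonoid.powers (⟨h, hB⟩ : B)) w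
  obtain ⟨m, hm⟩ := s.2
  refine ⟨m, b, b.2, ?_⟩
  have := congrArg (locSubringMap A B h hB) hs
  rw [_root_.map_mul, psi_algebraMap, psi_algebraMap] at this
  rw [← this, ← hm]
  simp only [SubmonoidClass.coe_pow, map_pow]
  ring

lemma add_decomp (A : Type*) [CommRing A] (B : Subring A) (h : A) (hB : h ∈ B)
    (hsum : ∀ a : A, ∃ c : A, ∃ b ∈ B, a = c * h + b)
    (x : Localization.Away h) :
    ∃ a : A, ∃ y : Localization.Away (⟨h, hB⟩ : B),
      x = algebraMap A (Localization.Away h) a + locSubringMap A B h hB y := by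
  obtain ⟨⟨a₀, s⟩, hs⟩ := IsLocalization.surj (M := Submonoid.powers h) x
  obtain ⟨n, hn⟩ := s.2
  obtain ⟨c, b, hb, hab⟩ := hsum_pow A B h hB hsum n a₀
  refine ⟨c, IsLocalization.mk' _ (⟨b, hb⟩ : B) ⟨(⟨h, hB⟩ : B) ^ n, pow_mem (Submonoid.mem_powers _) n⟩, ?_⟩
  have hu : IsUnit (algebraMap A (Localization.Away h) (h ^ n)) :=
    IsLocalization.map_units (M := Submonoid.powers h) (Localization.Away h) ⟨h ^ n, pow_mem (Submonoid.mem_powers _) n⟩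
  apply hu.mul_right_cancel
  have hmk : locSubringMap A B h hB
      (IsLocalization.mk' (Localization.Away (⟨h, hB⟩ : B)) (⟨b, hb⟩ : B)
        (⟨(⟨h, hB⟩ : B) ^ n, pow_mem (Submonoid.mem_powers _) n⟩ : Submonoid.powers (⟨h, hB⟩ : B))) *
      algebraMap A (Localization.Away h) (h ^ n) =
      algebraMap A (Localization.Away h) b := by
    have spec := IsLocalization.mk'_spec (Localization.Away (⟨h, hB⟩ : B)) (⟨b, hb⟩ : B)
      (⟨(⟨h, hB⟩ : B) ^ n, pow_mem (Submonoid.mem_powers _) n⟩ : Submonoid.powers (⟨h, hB⟩ : B))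
    have h2 := congrArg (locSubringMap A B h hB) spec
    rw [_root_.map_mul, psi_algebraMap, psi_algebraMap] at h2
    rw [← h2]
    simp only [SubmonoidClass.coe_pow, map_pow]
  have hx : x * algebraMap A (Localization.Away h) (h ^ n) =
      algebraMap A (Localization.Away h) a₀ := by
    rw [← hs, ← hn]
  rw [add_mul, hmk, hx, hab]
  rw [map_add, _root_.map_mul]

end RingPart



section Core

variable (A : Type*) [CommRing A] (h : A)

/-- Elements of `A_h` of the form `φ(h^N * a)`. -/
def sPow (N : ℕ) : Set (Localization.Away h) :=
  Set.range (fun a : A => algebraMap A (Localization.Away h) (h ^ N * a))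

variable {A h}

lemma sPow_anti {L N : ℕ} (hLN : L ≤ N) : sPow A h N ⊆ sPow A h L := by
  rintro x ⟨a, rfl⟩
  refine ⟨h ^ (N - L) * a, ?_⟩
  simp only []
  congr 1
  rw [← mul_assoc, ← pow_add]
  congr 2
  omega

lemma sPow_neg {N : ℕ} {x : Localization.Away h} (hx : x ∈ sPow A h N) :
    -x ∈ sPow A h N := by
  obtain ⟨a, rfl⟩ := hx
  exact ⟨-a, by simp⟩

lemma sPow_subset_range (N : ℕ) :
    sPow A h N ⊆ Set.range (algebraMap A (Localization.Away h)) := by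
  rintro x ⟨a, rfl⟩
  exact ⟨h ^ N * a, rfl⟩

lemma mem_sPow (N : ℕ) (a : A) :
    algebraMap A (Localization.Away h) (h ^ N * a) ∈ sPow A h N :=
  ⟨a, rfl⟩

lemma mul_sPow {w : Localization.Away h} {m : ℕ} {b : A}
    (hm : algebraMap A (Localization.Away h) h ^ m * w = algebraMap A (Localization.Away h) b)
    {N : ℕ} {z : Localization.Away h} (hz : z ∈ sPow A h N) (hmN : m ≤ N) :
    w * z ∈ sPow A h (N - m) := by
  obtain ⟨a, rfl⟩ := hz
  refine ⟨b * a, ?_⟩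
  simp only []
  have hN : h ^ N = h ^ (N - m) * h ^ m := by rw [← pow_add]; congr 1; omega
  rw [hN]
  simp only [_root_.map_mul, map_pow]
  rw [← hm]
  ring

lemma sPow_mul {w : Localization.Away h} {m : ℕ} {b : A}
    (hm : algebraMap A (Localization.Away h) h ^ m * w = algebraMap A (Localization.Away h) b)
    {N : ℕ} {z : Localization.Away h} (hz : z ∈ sPow A h N) (hmN : m ≤ N) :
    z * w ∈ sPow A h (N - m) := by
  rw [mul_comm]; exact mul_sPow hm hz hmN

lemma exists_third {r : ℕ} (hr : 3 ≤ r) (i j : Fin r) : ∃ p : Fin r, p ≠ i ∧ p ≠ j := by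
  have h2 : ({i, j} : Finset (Fin r)).card ≤ 2 :=
    (Finset.card_insert_le _ _).trans (by simp)
  have hne : (({i, j} : Finset (Fin r))ᶜ).Nonempty := by
    rw [← Finset.card_pos, Finset.card_compl, Fintype.card_fin]
    omega
  obtain ⟨p, hp⟩ := hne
  simp only [Finset.mem_compl, Finset.mem_insert, Finset.mem_singleton, not_or] at hp
  exact ⟨p, hp.1, hp.2⟩

lemma conj_mul4 {G : Type*} [Group G] (g x1 x2 x3 x4 : G) :
    g * (x1 * x2 * x3 * x4) * g⁻¹ =
      (g * x1 * g⁻¹) * (g * x2 * g⁻¹) * (g * x3 * g⁻¹) * (g * x4 * g⁻¹) := by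
  group

/-- Conjugation of a "deep" elementary subgroup by a single elementary unit with
denominator bound `m` lands in the prescribed elementary subgroup. -/
lemma conj_gen {r : ℕ} (hr : 3 ≤ r) (k l : Fin r) (hkl : k ≠ l)
    (w : Localization.Away h) (m : ℕ) (b : A)
    (hm : algebraMap A (Localization.Away h) h ^ m * w = algebraMap A (Localization.Away h) b)
    (L : ℕ) :
    ∀ g ∈ elGroupOn r (Localization.Away h) (sPow A h (2 * L + 2 * m)),
      elemUnit k l hkl w * g * (elemUnit k l hkl w)⁻¹ ∈
        elGroupOn r (Localization.Away h) (sPow A h L) := by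
  set N := 2 * L + 2 * m with hN
  apply conj_mem_of_mem_elGroupOn
  intro x hx
  rw [mem_elemSetOn] at hx
  obtain ⟨i, j, z, hij, hz, rfl⟩ := hx
  have hzL : z ∈ sPow A h L := sPow_anti (by omega) hz
  by_cases hli : l = i
  · by_cases hkj : k = j
    · -- hard case: (k,l) = (j,i)
      have e1 : i = l := hli.symm
      subst e1
      have e2 : j = k := hkj.symm
      subst e2
      obtain ⟨p, hpi, hpj⟩ := exists_third hr i j
      obtain ⟨a, ha⟩ := hz
      have hip : i ≠ p := hpi.symm
      have hz12 : z = algebraMap A (Localization.Away h) (h ^ (L + m) * a) *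
          algebraMap A (Localization.Away h) (h ^ (L + m) * 1) := by
        rw [← ha, ← _root_.map_mul]
        congr 1
        rw [hN]; ring
      have key1 : ∀ z' ∈ sPow A h (L + m),
          elemUnit j i hkl w * elemUnit i p hip z' * (elemUnit j i hkl w)⁻¹ ∈
            elGroupOn r (Localization.Away h) (sPow A h L) := by
        intro z' hz'
        rw [elemUnit_conj2 hpj.symm hkl hip w z']
        refine mul_mem (elemUnit_mem hip (sPow_anti (by omega) hz')) ?_
        have : w * z' ∈ sPow A h (L + m - m) := mul_sPow hm hz' (by omega)
        exact elemUnit_mem hpj.symm (by simpa using this)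
      have key2 : ∀ z' ∈ sPow A h (L + m),
          elemUnit j i hkl w * elemUnit p j hpj z' * (elemUnit j i hkl w)⁻¹ ∈
            elGroupOn r (Localization.Away h) (sPow A h L) := by
        intro z' hz'
        rw [elemUnit_conj3 hip hij hpj hpi hkl w z']
        refine mul_mem (elemUnit_mem hpi ?_) (elemUnit_mem hpj (sPow_anti (by omega) hz'))
        have : z' * w ∈ sPow A h (L + m - m) := sPow_mul hm hz' (by omega)
        exact sPow_neg (by simpa using this)
      have hz1 : (algebraMap A (Localization.Away h)) (h ^ (L + m) * a) ∈ sPow A h (L + m) :=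
        mem_sPow _ _
      have hz2 : (algebraMap A (Localization.Away h)) (h ^ (L + m) * 1) ∈ sPow A h (L + m) :=
        mem_sPow _ _
      rw [show elemUnit i j hij z =
          elemUnit i p hip (algebraMap A (Localization.Away h) (h ^ (L + m) * a)) *
            elemUnit p j hpj (algebraMap A (Localization.Away h) (h ^ (L + m) * 1)) *
            elemUnit i p hip (-(algebraMap A (Localization.Away h) (h ^ (L + m) * a))) *
            elemUnit p j hpj (-(algebraMap A (Localization.Away h) (h ^ (L + m) * 1))) from by
        rw [← elemUnit_commutator hij hip hpj, ← hz12]]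
      rw [conj_mul4]
      exact mul_mem (mul_mem (mul_mem (key1 _ hz1) (key2 _ hz2))
        (key1 _ (sPow_neg hz1))) (key2 _ (sPow_neg hz2))
    · -- k = j fails, l = i : case 2
      have e1 : i = l := hli.symm
      subst e1
      rw [elemUnit_conj2 hkj hkl hij w z]
      refine mul_mem (elemUnit_mem hij hzL) ?_
      have hwz : w * z ∈ sPow A h (N - m) := mul_sPow hm hz (by omega)
      exact elemUnit_mem hkj (sPow_anti (by omega) hwz)
  · by_cases hkj : k = j
    · -- case 3
      have e2 : j = k := hkj.symm
      subst e2
      have hlj : l ≠ j := hkl.symm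
      have hil : i ≠ l := fun hc => hli hc.symm
      rw [elemUnit_conj3 hli hlj hij hil hkl w z]
      have hzw : z * w ∈ sPow A h (N - m) := sPow_mul hm hz (by omega)
      exact mul_mem (elemUnit_mem hil (sPow_neg (sPow_anti (by omega) hzw)))
        (elemUnit_mem hij hzL)
    · -- commuting case
      rw [elemUnit_conj_comm hkl hij hli (fun hc : j = k => hkj hc.symm) w z]
      exact elemUnit_mem hij hzL

/-- **Main Lemma**: conjugation by elements of `E_r` with entries in `W`
moves deep elementary subgroups into prescribed elementary subgroups. -/
lemma main_conj {r : ℕ} (hr : 3 ≤ r) (W : Set (Localization.Away h))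
    (hW : ∀ w ∈ W, ∃ m : ℕ, ∃ b : A,
      algebraMap A (Localization.Away h) h ^ m * w = algebraMap A (Localization.Away h) b) :
    ∀ β ∈ elGroupOn r (Localization.Away h) W, ∀ L : ℕ, ∃ N : ℕ,
      (∀ g ∈ elGroupOn r (Localization.Away h) (sPow A h N),
          β * g * β⁻¹ ∈ elGroupOn r (Localization.Away h) (sPow A h L)) ∧
      (∀ g ∈ elGroupOn r (Localization.Away h) (sPow A h N),
          β⁻¹ * g * β ∈ elGroupOn r (Localization.Away h) (sPow A h L)) := by
  intro β hβ
  induction hβ using Subgroup.closure_induction with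
  | mem x hx =>
    rw [mem_elemSetOn] at hx
    obtain ⟨k, l, w, hkl, hwW, rfl⟩ := hx
    obtain ⟨m, b, hm⟩ := hW w hwW
    intro L
    refine ⟨2 * L + 2 * m, conj_gen hr k l hkl w m b hm L, ?_⟩
    have hminus : algebraMap A (Localization.Away h) h ^ m * (-w) =
        algebraMap A (Localization.Away h) (-b) := by
      rw [map_neg, ← hm]; ring
    intro g hg
    have := conj_gen hr k l hkl (-w) m (-b) hminus L g hg
    rwa [← elemUnit_inv, inv_inv] at this
  | one =>
    intro L
    exact ⟨L, fun g hg => by simpa using hg, fun g hg => by simpa using hg⟩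
  | mul β₁ β₂ hβ₁ hβ₂ ih₁ ih₂ =>
    intro L
    obtain ⟨K₁, hK₁f, hK₁b⟩ := ih₁ L
    obtain ⟨K₂, hK₂f, hK₂b⟩ := ih₂ L
    obtain ⟨N₁, hN₁f, _⟩ := ih₂ K₁
    obtain ⟨N₂, _, hN₂b⟩ := ih₁ K₂
    refine ⟨max N₁ N₂, ?_, ?_⟩
    · intro g hg
      have hg₁ : g ∈ elGroupOn r (Localization.Away h) (sPow A h N₁) :=
        elGroupOn_mono (sPow_anti (le_max_left _ _)) hg
      have h1 := hN₁f g hg₁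
      have h2 := hK₁f _ h1
      have : β₁ * β₂ * g * (β₁ * β₂)⁻¹ = β₁ * (β₂ * g * β₂⁻¹) * β₁⁻¹ := by group
      rwa [this]
    · intro g hg
      have hg₂ : g ∈ elGroupOn r (Localization.Away h) (sPow A h N₂) :=
        elGroupOn_mono (sPow_anti (le_max_right _ _)) hg
      have h1 := hN₂b g hg₂
      have h2 := hK₂b _ h1
      have : (β₁ * β₂)⁻¹ * g * (β₁ * β₂) = β₂⁻¹ * (β₁⁻¹ * g * β₁) * β₂ := by group
      rwa [this]
  | inv β₀ hβ₀ ih =>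
    intro L
    obtain ⟨N, hf, hb⟩ := ih L
    refine ⟨N, ?_, ?_⟩
    · intro g hg
      simpa using hb g hg
    · intro g hg
      simpa [inv_inv] using hf g hg

end Core



end VorstAux

open VorstAux in
/-- **Vorst–Lindel.** If `B ⊆ A` is a subring, `h ∈ B` non-nilpotent with
`Ah + B = A`, then every `α ∈ E_r(A_h)` factors as `α = γ_h · β` with `γ ∈ E_r(A)`
and `β ∈ E_r(B_h)`. -/
theorem elementary_factorization_of_patching
    (A : Type*) [CommRing A] (B : Subring A) (h : A) (hB : h ∈ B)
    (hh : ¬ IsNilpotent h)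
    (hsum : ∀ a : A, ∃ c : A, ∃ b ∈ B, a = c * h + b)
    (r : ℕ) (hr : 3 ≤ r) :
    ∀ α ∈ elementaryGroup r (Localization.Away h),
      ∃ γ ∈ elementaryGroup r A,
        ∃ β ∈ elementaryGroup r (Localization.Away (⟨h, hB⟩ : B)),
          α = Units.map ((algebraMap A (Localization.Away h)).mapMatrix).toMonoidHom γ *
              Units.map ((locSubringMap A B h hB).mapMatrix).toMonoidHom β := by
  set Ah := Localization.Away h
  set φ := algebraMap A Ah with hφ
  set ψ := locSubringMap A B h hB with hψ
  set F := Units.map (φ.mapMatrix.toMonoidHom :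
    Matrix (Fin r) (Fin r) A →* Matrix (Fin r) (Fin r) Ah)
  set G := Units.map (ψ.mapMatrix.toMonoidHom :
    Matrix (Fin r) (Fin r) (Localization.Away (⟨h, hB⟩ : B)) →* Matrix (Fin r) (Fin r) Ah)
  set S : Set (Matrix (Fin r) (Fin r) Ah)ˣ :=
    {α | ∃ γ ∈ elementaryGroup r A,
      ∃ β ∈ elementaryGroup r (Localization.Away (⟨h, hB⟩ : B)), α = F γ * G β} with hS
  set H : Subgroup (Matrix (Fin r) (Fin r) Ah)ˣ := (elementaryGroup r A).map F with hHdef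
  set K : Subgroup (Matrix (Fin r) (Fin r) Ah)ˣ :=
    (elementaryGroup r (Localization.Away (⟨h, hB⟩ : B))).map G with hKdef
  have hH : elGroupOn r Ah (Set.range φ) = H := (map_elementaryGroup φ).symm
  have hK : elGroupOn r Ah (Set.range ψ) = K := (map_elementaryGroup ψ).symm
  -- basic product manipulations with S
  have hmulHK : ∀ x ∈ H, ∀ y ∈ K, x * y ∈ S := by
    rintro x ⟨γ, hγ, rfl⟩ y ⟨β, hβ, rfl⟩
    exact ⟨γ, hγ, β, hβ, rfl⟩
  have hHS : ∀ x ∈ H, ∀ α ∈ S, x * α ∈ S := by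
    rintro x ⟨γ₀, hγ₀, rfl⟩ α ⟨γ, hγ, β, hβ, rfl⟩
    exact ⟨γ₀ * γ, mul_mem hγ₀ hγ, β, hβ, by rw [_root_.map_mul, mul_assoc]⟩
  have hSK : ∀ α ∈ S, ∀ y ∈ K, α * y ∈ S := by
    rintro α ⟨γ, hγ, β, hβ, rfl⟩ y ⟨β₀, hβ₀, rfl⟩
    exact ⟨γ, hγ, β * β₀, mul_mem hβ hβ₀, by rw [_root_.map_mul, mul_assoc]⟩
  -- clearing denominators for elements in the range of ψ
  have hWclear : ∀ w ∈ Set.range ψ, ∃ m : ℕ, ∃ b : A, φ h ^ m * w = φ b := by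
    rintro w ⟨y, rfl⟩
    obtain ⟨m, b, _, hmb⟩ := clear_denominator A B h hB y
    exact ⟨m, b, hmb⟩
  -- the key conjugation fact
  have key0 : ∀ β ∈ K, ∀ (i j : Fin r) (hij : i ≠ j) (a : A),
      β * elemUnit i j hij (φ a) * β⁻¹ ∈ S := by
    intro β hβ i j hij a
    rw [← hK] at hβ
    obtain ⟨N, hf, _⟩ := main_conj hr (Set.range ψ) hWclear β hβ 0
    obtain ⟨c, b, hbB, hacb⟩ := hsum_pow A B h hB hsum N a
    have hsplit : elemUnit i j hij (φ a) =
        elemUnit i j hij (φ (h ^ N * c)) * elemUnit i j hij (φ b) := by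
      rw [elemUnit_mul, ← map_add]
      congr 1
      rw [hacb]; ring
    have hconj : β * (elemUnit i j hij (φ (h ^ N * c)) * elemUnit i j hij (φ b)) * β⁻¹ =
        (β * elemUnit i j hij (φ (h ^ N * c)) * β⁻¹) *
          (β * elemUnit i j hij (φ b) * β⁻¹) := by group
    rw [hsplit, hconj]
    have h1 : β * elemUnit i j hij (φ (h ^ N * c)) * β⁻¹ ∈ H := by
      have := hf _ (elemUnit_mem hij (mem_sPow N c))
      rw [← hH]
      exact elGroupOn_mono (sPow_subset_range 0) this
    have h2 : β * elemUnit i j hij (φ b) * β⁻¹ ∈ K := by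
      have hb' : φ b ∈ Set.range ψ :=
        ⟨algebraMap B (Localization.Away (⟨h, hB⟩ : B)) ⟨b, hbB⟩,
          psi_algebraMap A B h hB ⟨b, hbB⟩⟩
      have : elemUnit i j hij (φ b) ∈ K := by
        rw [← hK]; exact elemUnit_mem hij hb'
      rw [hK] at hβ
      exact mul_mem (mul_mem hβ this) (inv_mem hβ)
    rw [hK] at hβ
    exact hmulHK _ h1 _ h2
  -- moving K-elements past H-elements
  have keyC : ∀ γ ∈ elementaryGroup r A, ∀ β ∈ K,
      β * F γ ∈ S ∧ β * (F γ)⁻¹ ∈ S := by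
    intro γ hγ
    induction hγ using Subgroup.closure_induction with
    | mem x hx =>
      obtain ⟨i, j, a, hij, hval⟩ := hx
      have hx' : x = elemUnit i j hij a := Units.ext hval
      subst hx'
      intro β hβ
      have hmap : F (elemUnit i j hij a) = elemUnit i j hij (φ a) := map_elemUnit φ i j hij a
      constructor
      · rw [hmap]
        have : β * elemUnit i j hij (φ a) = (β * elemUnit i j hij (φ a) * β⁻¹) * β := by group
        rw [this]
        exact hSK _ (key0 β hβ i j hij a) _ hβ
      · rw [hmap, elemUnit_inv]
        have hneg : -φ a = φ (-a) := by rw [_root_.map_neg]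
        rw [hneg]
        have : β * elemUnit i j hij (φ (-a)) =
            (β * elemUnit i j hij (φ (-a)) * β⁻¹) * β := by group
        rw [this]
        exact hSK _ (key0 β hβ i j hij (-a)) _ hβ
    | one =>
      intro β hβ
      constructor
      · rw [_root_.map_one, mul_one]
        simpa using hmulHK 1 (one_mem H) β hβ
      · rw [_root_.map_one, inv_one, mul_one]
        simpa using hmulHK 1 (one_mem H) β hβ
    | mul x y hx hy ihx ihy =>
      intro β hβ
      constructor
      · rw [_root_.map_mul, ← mul_assoc]
        obtain ⟨γ', hγ', β', hβ', heq⟩ := (ihx β hβ).1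
        rw [heq, mul_assoc]
        have hβ'K : G β' ∈ K := ⟨β', hβ', rfl⟩
        have := (ihy (G β') hβ'K).1
        exact hHS _ ⟨γ', hγ', rfl⟩ _ this
      · rw [_root_.map_mul, _root_.mul_inv_rev, ← mul_assoc]
        obtain ⟨γ', hγ', β', hβ', heq⟩ := (ihy β hβ).2
        rw [heq, mul_assoc]
        have hβ'K : G β' ∈ K := ⟨β', hβ', rfl⟩
        have := (ihx (G β') hβ'K).2
        exact hHS _ ⟨γ', hγ', rfl⟩ _ this
    | inv x hx ih =>
      intro β hβ
      constructor
      · rw [_root_.map_inv]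
        exact (ih β hβ).2
      · rw [_root_.map_inv, inv_inv]
        exact (ih β hβ).1
  -- product of two S-elements is in S
  have hSS : ∀ α₁ ∈ S, ∀ α₂ ∈ S, α₁ * α₂ ∈ S := by
    rintro α₁ ⟨γ₁, hγ₁, β₁, hβ₁, rfl⟩ α₂ ⟨γ₂, hγ₂, β₂, hβ₂, rfl⟩
    have hβ₁K : G β₁ ∈ K := ⟨β₁, hβ₁, rfl⟩
    have hmid : G β₁ * F γ₂ ∈ S := (keyC γ₂ hγ₂ (G β₁) hβ₁K).1
    have : F γ₁ * G β₁ * (F γ₂ * G β₂) = F γ₁ * ((G β₁ * F γ₂) * G β₂) := by group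
    rw [this]
    exact hHS _ ⟨γ₁, hγ₁, rfl⟩ _ (hSK _ hmid _ ⟨β₂, hβ₂, rfl⟩)
  -- final induction
  have hfinal : ∀ α ∈ elementaryGroup r Ah, α ∈ S ∧ α⁻¹ ∈ S := by
    intro α hα
    induction hα using Subgroup.closure_induction with
    | mem x hx =>
      obtain ⟨i, j, z, hij, hval⟩ := hx
      have hx' : x = elemUnit i j hij z := Units.ext hval
      subst hx'
      obtain ⟨a, y, hay⟩ := add_decomp A B h hB hsum z
      have hgen : ∀ (a : A) (y : Localization.Away (⟨h, hB⟩ : B)),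
          elemUnit i j hij (φ a + ψ y) ∈ S := by
        intro a y
        refine ⟨elemUnit i j hij a, elemUnit_mem_elementaryGroup hij a,
          elemUnit i j hij y, elemUnit_mem_elementaryGroup hij y, ?_⟩
        rw [map_elemUnit φ i j hij a, map_elemUnit ψ i j hij y, elemUnit_mul]
      constructor
      · rw [hay]; exact hgen a y
      · rw [elemUnit_inv, hay]
        have : -(φ a + ψ y) = φ (-a) + ψ (-y) := by
          rw [_root_.map_neg, _root_.map_neg]; ring
        rw [this]
        exact hgen (-a) (-y)
    | one =>
      have h1 : (1 : (Matrix (Fin r) (Fin r) Ah)ˣ) ∈ S :=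
        ⟨1, one_mem _, 1, one_mem _, by rw [_root_.map_one, _root_.map_one, mul_one]⟩
      exact ⟨h1, by simpa using h1⟩
    | mul x y hx hy ihx ihy =>
      refine ⟨hSS x ihx.1 y ihy.1, ?_⟩
      rw [_root_.mul_inv_rev]
      exact hSS _ ihy.2 _ ihx.2
    | inv x hx ih =>
      exact ⟨ih.2, by simpa using ih.1⟩
  intro α hα
  exact (hfinal α hα).1
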